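/- Let G = (V,E) be a finite simple graph on n vertices with leader set V_ℓ ⊆ V of size m, and suppose V_ℓ is a zero forcing set of G, i.e., dset(G,V_ℓ) = V. Then there exists an edge set E_B ⊆ E with |E_B| = n − m such that for every graph Ĝ = (V,Ê) with E_B ⊆ Ê ⊆ E and every matrix M ∈ M(Ĝ), the controllability matrix has full rank: rank(C(M,H)) = n. That is, every subgraph of G containing the backbone edges is strong structurally controllable with leaders V_ℓ. -/

import Mathlib

open Matrix

variable {V : Type*}

def MatFamily [Fintype V] (G : SimpleGraph V) : Set (Matrix V V ℝ) :=
  {M | M.IsSymm ∧ ∀ i j : V, i ≠ j → (M i j ≠ 0 ↔ G.Adj i j)}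

def inputMatrix [DecidableEq V] {m : ℕ} (ℓ : Fin m → V) : Matrix V (Fin m) ℝ :=
  Matrix.of fun i j => if i = ℓ j then (1 : ℝ) else 0

noncomputable def ctrbMatrix [Fintype V] [DecidableEq V] {m : ℕ} (M : Matrix V V ℝ)
    (H : Matrix V (Fin m) ℝ) : Matrix V (Fin (Fintype.card V) × Fin m) ℝ :=
  Matrix.of fun i p => (M ^ (p.1 : ℕ) * H) i p.2

inductive ZFDerived (G : SimpleGraph V) (S : Set V) : V → Prop
  | init {v : V} : v ∈ S → ZFDerived G S v
  | force {u v : V} : ZFDerived G S v → G.Adj v u →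
      (∀ w : V, G.Adj v w → w ≠ u → ZFDerived G S w) → ZFDerived G S u

def dset (G : SimpleGraph V) (S : Set V) : Set V := {v | ZFDerived G S v}

noncomputable def zeta (G : SimpleGraph V) (S : Set V) : ℕ := (dset G S).ncard

def IsPMI {m : ℕ} (G : SimpleGraph V) (ℓ : Fin m → V) {k : ℕ}
    (v : Fin k → V) (π : Fin k → Fin m) : Prop :=
  ∀ i : Fin k, G.edist (ℓ (π i)) (v i) ≠ ⊤ ∧
    ∀ j : Fin k, i < j → G.edist (ℓ (π i)) (v i) < G.edist (ℓ (π i)) (v j)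

noncomputable def deltaPMI {m : ℕ} (G : SimpleGraph V) (ℓ : Fin m → V) : ℕ :=
  sSup {k : ℕ | ∃ (v : Fin k → V) (π : Fin k → Fin m), IsPMI G ℓ v π}

noncomputable def gammaSSC [Fintype V] [DecidableEq V] {m : ℕ} (G : SimpleGraph V)
    (ℓ : Fin m → V) : ℕ :=
  sInf {r : ℕ | ∃ M ∈ MatFamily G, r = (ctrbMatrix M (inputMatrix ℓ)).rank}

def IsZFSBackbone (G : SimpleGraph V) (Vl : Set V) (EB : Set (Sym2 V)) : Prop :=
  EB ⊆ G.edgeSet ∧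
    ∀ Gh : SimpleGraph V, Gh ≤ G → EB ⊆ Gh.edgeSet → zeta G Vl ≤ zeta Gh Vl

def IsDistBackbone {m : ℕ} (G : SimpleGraph V) (ℓ : Fin m → V) (EB : Set (Sym2 V)) : Prop :=
  EB ⊆ G.edgeSet ∧
    ∀ Gh : SimpleGraph V, Gh ≤ G → EB ⊆ Gh.edgeSet → deltaPMI G ℓ ≤ deltaPMI Gh ℓ

section AuxZF

variable {V : Type*}

lemma zf_eig_zero [Fintype V] {Gh : SimpleGraph V} {S : Set V} {M : Matrix V V ℝ}
    (hM : M ∈ MatFamily Gh) {x : V → ℝ} {μ : ℝ} (hx : M.mulVec x = μ • x)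
    (h0 : ∀ v ∈ S, x v = 0) : ∀ v, ZFDerived Gh S v → x v = 0 := by
  intro v hv
  induction hv with
  | init h => exact h0 _ h
  | @force u v hv hadj hall ihv ihall =>
    have hvu : v ≠ u := Gh.ne_of_adj hadj
    have hMvu : M v u ≠ 0 := (hM.2 v u hvu).mpr hadj
    have hsum : M.mulVec x v = M v u * x u := by
      rw [Matrix.mulVec, dotProduct]
      refine Finset.sum_eq_single u ?_ ?_
      · intro b _ hbu
        by_cases hbv : b = v
        · subst hbv; rw [ihv, mul_zero]
        · by_cases hadjb : Gh.Adj v b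
          · rw [ihall b hadjb hbu, mul_zero]
          · have : M v b = 0 := by
              by_contra hne
              exact hadjb ((hM.2 v b (Ne.symm hbv)).mp hne)
            rw [this, zero_mul]
      · intro h; exact absurd (Finset.mem_univ u) h
    have hMv : M.mulVec x v = μ * x v := by rw [hx]; rfl
    have : M v u * x u = 0 := by rw [← hsum, hMv, ihv, mul_zero]
    exact (mul_eq_zero.mp this).resolve_left hMvu

/-- One step of zero forcing. -/
def zfStep (G : SimpleGraph V) (S : Set V) : Set V :=
  S ∪ {u | ∃ v ∈ S, G.Adj v u ∧ ∀ w, G.Adj v w → w ≠ u → w ∈ S}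

/-- Iterated zero forcing. -/
def zfIter (G : SimpleGraph V) (S : Set V) : ℕ → Set V
  | 0 => S
  | k + 1 => zfStep G (zfIter G S k)

lemma zfIter_mono (G : SimpleGraph V) (S : Set V) {k k' : ℕ} (h : k ≤ k') :
    zfIter G S k ⊆ zfIter G S k' := by
  induction h with
  | refl => exact subset_rfl
  | step h ih => exact fun x hx => Set.subset_union_left (ih hx)

lemma zfIter_subset_dset (G : SimpleGraph V) (S : Set V) :
    ∀ k, zfIter G S k ⊆ dset G S := by
  intro k
  induction k with
  | zero => exact fun v hv => ZFDerived.init hv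
  | succ k ih =>
    rintro u (hu | ⟨v, hv, hadj, hall⟩)
    · exact ih hu
    · exact ZFDerived.force (ih hv) hadj (fun w hw hwu => ih (hall w hw hwu))

lemma dset_subset_iUnion [Fintype V] (G : SimpleGraph V) (S : Set V) :
    dset G S ⊆ ⋃ k, zfIter G S k := by
  classical
  intro v hv
  induction hv with
  | init h => exact Set.mem_iUnion.mpr ⟨0, h⟩
  | @force u v hv hadj hall ihv ihall =>
    let g : V → ℕ := fun w => if h : ∃ k, w ∈ zfIter G S k then Nat.find h else 0
    have hg : ∀ w, (∃ k, w ∈ zfIter G S k) → w ∈ zfIter G S (g w) := by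
      intro w hw
      simp only [g, dif_pos hw]
      exact Nat.find_spec hw
    set N := Finset.univ.sup g with hN
    have hgN : ∀ w : V, g w ≤ N := fun w => Finset.le_sup (Finset.mem_univ w)
    have hmemN : ∀ w, (∃ k, w ∈ zfIter G S k) → w ∈ zfIter G S N := by
      intro w hw; exact zfIter_mono G S (hgN w) (hg w hw)
    refine Set.mem_iUnion.mpr ⟨N + 1, Or.inr ⟨v, ?_, hadj, ?_⟩⟩
    · exact hmemN v (Set.mem_iUnion.mp ihv)
    · intro w hw hwu
      exact hmemN w (Set.mem_iUnion.mp (ihall w hw hwu))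

end AuxZF

section AuxRank

variable {V : Type*}

lemma vecMul_inputMatrix [Fintype V] [DecidableEq V] {m : ℕ} (ℓ : Fin m → V)
    (x : V → ℝ) (j : Fin m) : (x ᵥ* inputMatrix ℓ) j = x (ℓ j) := by
  simp [Matrix.vecMul, dotProduct, inputMatrix, mul_ite, mul_one, mul_zero]

lemma vecMul_sum_apply {ι : Type*} [Fintype V] (s : Finset ι) (x : V → ℝ)
    (B : ι → Matrix V V ℝ) (t : V) :
    (x ᵥ* (∑ i ∈ s, B i)) t = ∑ i ∈ s, (x ᵥ* B i) t := by
  classical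
  induction s using Finset.induction with
  | empty => simp [Matrix.vecMul_zero]
  | insert _ _ h ih =>
    rw [Finset.sum_insert h, Matrix.vecMul_add, Finset.sum_insert h, ← ih]
    rfl

lemma vecMul_smul_matrix [Fintype V] (c : ℝ) (A : Matrix V V ℝ) (x : V → ℝ) (t : V) :
    (x ᵥ* (c • A)) t = c * (x ᵥ* A) t := by
  simp only [Matrix.vecMul, dotProduct, Matrix.smul_apply, smul_eq_mul, Finset.mul_sum]
  exact Finset.sum_congr rfl fun i _ => by ring

open RealInnerProductSpace in
lemma ctrb_rank_full [Fintype V] [DecidableEq V] {m : ℕ} {Gh : SimpleGraph V} {ℓ : Fin m → V}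
    (hZF : ∀ u : V, ZFDerived Gh (Set.range ℓ) u)
    {M : Matrix V V ℝ} (hM : M ∈ MatFamily Gh) :
    (ctrbMatrix M (inputMatrix ℓ)).rank = Fintype.card V := by
  classical
  set n := Fintype.card V with hn
  set H := inputMatrix ℓ with hH
  have hsym : ∀ i j, M i j = M j i := fun i j => hM.1.apply j i
  have hMsymVec : ∀ x : V → ℝ, M.mulVec x = x ᵥ* M := by
    intro x
    have h := (Matrix.vecMul_transpose M x).symm
    rwa [hM.1] at h
  -- The subspace of vectors annihilating all M^k H
  let U : Submodule ℝ (EuclideanSpace ℝ V) :=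
    { carrier := {x : EuclideanSpace ℝ V |
        ∀ (k : ℕ) (j : Fin m), ((x : V → ℝ) ᵥ* (M ^ k)) (ℓ j) = 0}
      add_mem' := by
        intro a b ha hb
        intro k j
        show (((a : V → ℝ) + (b : V → ℝ)) ᵥ* (M ^ k)) (ℓ j) = 0
        rw [Matrix.add_vecMul]
        show ((a : V → ℝ) ᵥ* (M ^ k)) (ℓ j) + ((b : V → ℝ) ᵥ* (M ^ k)) (ℓ j) = 0
        rw [ha k j, hb k j, add_zero]
      zero_mem' := by
        intro k j
        show (((0 : V → ℝ)) ᵥ* (M ^ k)) (ℓ j) = 0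
        rw [Matrix.zero_vecMul]
        rfl
      smul_mem' := by
        intro c a ha k j
        show ((c • (a : V → ℝ)) ᵥ* (M ^ k)) (ℓ j) = 0
        rw [Matrix.smul_vecMul]
        show c • ((a : V → ℝ) ᵥ* (M ^ k)) (ℓ j) = 0
        rw [ha k j, smul_zero] }
  have hUbot : U = ⊥ := by
    by_contra hne
    haveI : Nontrivial U := Submodule.nontrivial_iff_ne_bot.mpr hne
    -- the symmetric endomorphism x ↦ M x
    let T : Module.End ℝ (EuclideanSpace ℝ V) :=
      { toFun := fun x => WithLp.toLp 2 (M.mulVec x)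
        map_add' := fun x y => congrArg (WithLp.toLp 2) (Matrix.mulVec_add M x y)
        map_smul' := fun c x => congrArg (WithLp.toLp 2) (Matrix.mulVec_smul M c x) }
    have hTapp : ∀ x : EuclideanSpace ℝ V, T x = M.mulVec x := fun x => rfl
    have hTsym : T.IsSymmetric := by
      intro x y
      rw [PiLp.inner_apply, PiLp.inner_apply]
      simp only [RCLike.inner_apply, conj_trivial]
      simp only [mul_comm (y.ofLp _), mul_comm ((T y).ofLp _)]
      show ∑ i, M.mulVec x i * y i = ∑ i, x i * M.mulVec y i
      simp only [Matrix.mulVec, dotProduct, Finset.sum_mul, Finset.mul_sum]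
      rw [Finset.sum_comm]
      refine Finset.sum_congr rfl fun i _ => Finset.sum_congr rfl fun j _ => ?_
      rw [hsym j i]; ring
    have hUinv : ∀ x ∈ U, T x ∈ U := by
      intro x hx k j
      show ((M.mulVec x : V → ℝ) ᵥ* (M ^ k)) (ℓ j) = 0
      rw [hMsymVec x, Matrix.vecMul_vecMul, ← pow_succ' M k]
      exact hx (k + 1) j
    have hT'sym : (T.restrict hUinv).IsSymmetric := by
      intro x y
      rw [Submodule.coe_inner, Submodule.coe_inner, LinearMap.restrict_coe_apply,
        LinearMap.restrict_coe_apply]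
      exact hTsym (x : EuclideanSpace ℝ V) (y : EuclideanSpace ℝ V)
    have hev : ∃ μ : ℝ, Module.End.HasEigenvalue (T.restrict hUinv) μ :=
      ⟨_, hT'sym.hasEigenvalue_iSup_of_finiteDimensional⟩
    obtain ⟨μ, hμ⟩ := hev
    obtain ⟨y, hy⟩ := hμ.exists_hasEigenvector
    have hyval : M.mulVec (y : EuclideanSpace ℝ V) = μ • ((y : EuclideanSpace ℝ V) : V → ℝ) := by
      have h1 := hy.apply_eq_smul
      have h2 := congrArg Subtype.val h1
      rw [LinearMap.restrict_coe_apply] at h2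
      exact congrArg WithLp.ofLp h2
    have h0 : ∀ v ∈ Set.range ℓ, (y : EuclideanSpace ℝ V) v = 0 := by
      rintro v ⟨j, rfl⟩
      have := y.2 0 j
      rwa [pow_zero, Matrix.vecMul_one] at this
    have hzero : ∀ v, (y : EuclideanSpace ℝ V) v = 0 :=
      fun v => zf_eig_zero hM hyval h0 v (hZF v)
    have hy0 : (y : EuclideanSpace ℝ V) = 0 := WithLp.ofLp_injective 2 (funext hzero)
    exact hy.2 (Subtype.ext hy0)
  -- Cayley--Hamilton to extend vanishing to all powers
  have hCH : M ^ n = ∑ i ∈ Finset.range n, (-(M.charpoly.coeff i)) • M ^ i := by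
    rcases Nat.eq_zero_or_pos n with h0 | _
    · haveI : IsEmpty V := Fintype.card_eq_zero_iff.mp h0
      exact Subsingleton.elim _ _
    · have hdeg : M.charpoly.natDegree = n := Matrix.charpoly_natDegree_eq_dim M
      have haeval := Matrix.aeval_self_charpoly M
      rw [Polynomial.aeval_eq_sum_range, hdeg, Finset.sum_range_succ] at haeval
      have hcn : M.charpoly.coeff n = 1 := by
        rw [← hdeg]; exact (Matrix.charpoly_monic M).coeff_natDegree
      rw [hcn, one_smul] at haeval
      have h2 : M ^ n = -∑ i ∈ Finset.range n, M.charpoly.coeff i • M ^ i :=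
        eq_neg_of_add_eq_zero_right haeval
      rw [h2, ← Finset.sum_neg_distrib]
      exact Finset.sum_congr rfl fun i _ => (neg_smul _ _).symm
  -- kernel of the transposed controllability matrix is trivial
  set A := ctrbMatrix M H with hA
  have hker : ∀ x : V → ℝ, Aᵀ.mulVec x = 0 → x = 0 := by
    intro x hx
    have hlow : ∀ k, k < n → ∀ j : Fin m, (x ᵥ* (M ^ k)) (ℓ j) = 0 := by
      intro k hk j
      have hp := congrFun hx (⟨k, hk⟩, j)
      have hps : ∑ i, (M ^ k * H) i j * x i = 0 := hp
      have h2 : (x ᵥ* (M ^ k * H)) j = 0 := by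
        rw [← hps, Matrix.vecMul]
        show (x ⬝ᵥ fun i => (M ^ k * H) i j) = _
        rw [dotProduct]
        exact Finset.sum_congr rfl fun i _ => mul_comm _ _
      rwa [← Matrix.vecMul_vecMul, hH, vecMul_inputMatrix] at h2
    have hall : ∀ k, ∀ j : Fin m, (x ᵥ* (M ^ k)) (ℓ j) = 0 := by
      intro k
      induction k using Nat.strong_induction_on with
      | _ k ih =>
        intro j
        by_cases hk : k < n
        · exact hlow k hk j
        · push_neg at hk
          have hn0 : 0 < n := by
            rcases Nat.eq_zero_or_pos n with h0 | h
            · exact (Fintype.card_eq_zero_iff.mp h0).elim (ℓ j)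
            · exact h
          have hMk : M ^ k = ∑ i ∈ Finset.range n,
              (-(M.charpoly.coeff i)) • (M ^ (k - n + i)) := by
            conv_lhs => rw [show k = (k - n) + n from (Nat.sub_add_cancel hk).symm]
            rw [pow_add, hCH, Finset.mul_sum]
            exact Finset.sum_congr rfl fun i _ => by
              rw [Matrix.mul_smul, ← pow_add]
          rw [hMk, vecMul_sum_apply]
          refine Finset.sum_eq_zero fun i hi => ?_
          rw [vecMul_smul_matrix, ih (k - n + i) (by have := Finset.mem_range.mp hi; omega) j,
            mul_zero]
    have hxU : WithLp.toLp 2 x ∈ U := fun k j => hall k j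
    rw [hUbot] at hxU
    simpa using hxU
  -- conclude on the rank
  have hkerbot : LinearMap.ker (Aᵀ.mulVecLin) = ⊥ := by
    rw [LinearMap.ker_eq_bot']
    intro x hx
    exact hker x hx
  have hrank := LinearMap.finrank_range_add_finrank_ker (Aᵀ.mulVecLin)
  rw [hkerbot, finrank_bot, add_zero, Module.finrank_pi] at hrank
  rw [← Matrix.rank_transpose, Matrix.rank]
  exact hrank

end AuxRank

theorem stmt7 [Fintype V] [DecidableEq V] {m : ℕ} (G : SimpleGraph V)
    (ℓ : Fin m → V) (hinj : Function.Injective ℓ)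
    (hZFS : dset G (Set.range ℓ) = Set.univ) :
    ∃ EB : Set (Sym2 V), EB ⊆ G.edgeSet ∧ EB.ncard = Fintype.card V - m ∧
      ∀ Gh : SimpleGraph V, Gh ≤ G → EB ⊆ Gh.edgeSet →
        ∀ M ∈ MatFamily Gh, (ctrbMatrix M (inputMatrix ℓ)).rank = Fintype.card V := by
  classical
  set S : Set V := Set.range ℓ with hS
  have hex : ∀ u : V, ∃ k, u ∈ zfIter G S k := by
    intro u
    have hu : u ∈ dset G S := hZFS ▸ Set.mem_univ u
    exact Set.mem_iUnion.mp (dset_subset_iUnion G S hu)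
  set r : V → ℕ := fun u => Nat.find (hex u) with hr
  have hrspec : ∀ u, u ∈ zfIter G S (r u) := fun u => Nat.find_spec (hex u)
  have hrle : ∀ u k, u ∈ zfIter G S k → r u ≤ k := fun u k h => Nat.find_min' (hex u) h
  have hrpos : ∀ u, u ∉ S → 0 < r u := by
    intro u hu
    rcases Nat.eq_zero_or_pos (r u) with h0 | h
    · refine absurd ?_ hu
      have := hrspec u
      rwa [h0] at this
    · exact h
  have key : ∀ u, u ∉ S → ∃ v, v ∈ zfIter G S (r u - 1) ∧ G.Adj v u ∧
      (∀ w, G.Adj v w → w ≠ u → w ∈ zfIter G S (r u - 1)) := by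
    intro u hu
    have hpos := hrpos u hu
    have heq : r u = (r u - 1) + 1 := by omega
    have hmem : u ∈ zfStep G (zfIter G S (r u - 1)) := by
      have := hrspec u
      rwa [heq] at this
    rcases hmem with hmem | ⟨v, hv, hadj, hall⟩
    · exact absurd (hrle u _ hmem) (by omega)
    · exact ⟨v, hv, hadj, hall⟩
  set f : V → V := fun u => if h : u ∉ S then (key u h).choose else u with hf
  have hfspec : ∀ u (h : u ∉ S), f u ∈ zfIter G S (r u - 1) ∧ G.Adj (f u) u ∧
      (∀ w, G.Adj (f u) w → w ≠ u → w ∈ zfIter G S (r u - 1)) := by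
    intro u h
    simp only [hf, dif_pos h]
    exact (key u h).choose_spec
  refine ⟨(fun u => s(f u, u)) '' Sᶜ, ?_, ?_, ?_⟩
  · rintro e ⟨u, hu, rfl⟩
    exact (hfspec u hu).2.1
  · have hinjOn : Set.InjOn (fun u => s(f u, u)) Sᶜ := by
      intro a ha b hb hab
      simp only [Sym2.eq, Sym2.rel_iff', Prod.mk.injEq, Prod.swap_prod_mk] at hab
      rcases hab with ⟨h1, h2⟩ | ⟨h1, h2⟩
      · exact h2
      · -- f a = b and a = f b : impossible by rank comparison
        exfalso
        have hra : r b ≤ r a - 1 := by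
          have := (hfspec a ha).1
          rw [h1] at this
          exact hrle b _ this
        have hrb : r a ≤ r b - 1 := by
          have := (hfspec b hb).1
          rw [← h2] at this
          exact hrle a _ this
        have hpa := hrpos a ha
        have hpb := hrpos b hb
        omega
    rw [Set.ncard_image_of_injOn hinjOn]
    have hcompl := Set.ncard_add_ncard_compl S
    have hrange : S.ncard = m := by
      rw [hS, ← Set.image_univ, Set.ncard_image_of_injective _ hinj, Set.ncard_univ,
        Nat.card_eq_fintype_card, Fintype.card_fin]
    have huniv : S.ncard + Sᶜ.ncard = Fintype.card V := by
      rw [hcompl, Nat.card_eq_fintype_card]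
    omega
  · intro Gh hle hEB M hMmem
    have hZFGh : ∀ u : V, ZFDerived Gh S u := by
      have hstrong : ∀ N, ∀ u, r u ≤ N → ZFDerived Gh S u := by
        intro N
        induction N with
        | zero =>
          intro u hu
          by_cases h : u ∈ S
          · exact ZFDerived.init h
          · exact absurd (hrpos u h) (by omega)
        | succ N ih =>
          intro u hu
          by_cases h : u ∈ S
          · exact ZFDerived.init h
          · obtain ⟨hfv, hadj, hall⟩ := hfspec u h
            have hpos := hrpos u h
            have hGh : Gh.Adj (f u) u := by
              have : s(f u, u) ∈ Gh.edgeSet := hEB ⟨u, h, rfl⟩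
              exact this
            refine ZFDerived.force (ih (f u) ?_) hGh ?_
            · have := hrle (f u) _ hfv
              omega
            · intro w hw hwu
              have hGw : G.Adj (f u) w := hle hw
              have := hrle w _ (hall w hGw hwu)
              exact ih w (by omega)
      exact fun u => hstrong (r u) u le_rfl
    exact ctrb_rank_full hZFGh hMmem
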